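/- arXiv:2211.10614 — 4 statements merged into one kernel-verified Lean document; each statement's English description precedes it below -/
import Mathlib

section
/- Let n ≥ 7 and let X ⊆ V(C_n) be a set of cycle vertices of the wheel W_{1,n} with |X| ≥ 2 satisfying: every gap of X contains at most 4 vertices, at most one gap of X contains 3 or more vertices, and whenever a gap of X contains at least 2 vertices each of its two neighboring gaps contains at most one vertex. Then X is a nonlocal resolving set of W_{1,n}. -/
/-- `X` is a nonlocal resolving set of `G`: every pair of distinct non-adjacent
vertices is resolved by some vertex of `X`. -/
def IsNLResolving {V : Type*} (G : SimpleGraph V) (X : Finset V) : Prop :=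
  ∀ u v : V, u ≠ v → ¬ G.Adj u v → ∃ x ∈ X, G.dist u x ≠ G.dist v x

/-- The nonlocal metric dimension of `G`. -/
noncomputable def nldim {V : Type*} [Fintype V] (G : SimpleGraph V) : ℕ :=
  sInf {n | ∃ X : Finset V, X.card = n ∧ IsNLResolving G X}

/-- `X` is a resolving set of `G`. -/
def IsResolving {V : Type*} (G : SimpleGraph V) (X : Finset V) : Prop :=
  ∀ u v : V, u ≠ v → ∃ x ∈ X, G.dist u x ≠ G.dist v x

/-- The metric dimension of `G`. -/
noncomputable def metricDim {V : Type*} [Fintype V] (G : SimpleGraph V) : ℕ :=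
  sInf {n | ∃ X : Finset V, X.card = n ∧ IsResolving G X}

/-- The corona product `G ⊙ H`: one copy of `G` and, for each vertex `g` of `G`,
a copy of `H` whose vertices are all joined to `g`. -/
def corona {V W : Type*} (G : SimpleGraph V) (H : SimpleGraph W) :
    SimpleGraph (V ⊕ V × W) :=
  SimpleGraph.fromRel (fun a b =>
    match a, b with
    | Sum.inl g, Sum.inl g' => G.Adj g g'
    | Sum.inl g, Sum.inr p => g = p.1
    | Sum.inr p, Sum.inr q => p.1 = q.1 ∧ H.Adj p.2 q.2
    | _, _ => False)

/-- The join `H + K₁`: a new vertex (`none`) adjacent to every vertex of `H`. -/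
def joinK1 {W : Type*} (H : SimpleGraph W) : SimpleGraph (Option W) :=
  SimpleGraph.fromRel (fun a b =>
    a = none ∨ ∃ w w', a = some w ∧ b = some w' ∧ H.Adj w w')

/-- The wheel `W_{1,n} = K₁ + Cₙ`, with central vertex `none`. -/
def wheel (n : ℕ) : SimpleGraph (Option (Fin n)) :=
  joinK1 (SimpleGraph.cycleGraph n)

/-- `A_{i,j}` is a gap of `X ⊆ V(Cₙ)`: `i, j ∈ X`, `i ≠ j`, and no vertex of
`{i+1, …, j-1}` (cyclically) lies in `X`. -/
def IsGap {n : ℕ} (X : Finset (Fin n)) (i j : Fin n) : Prop :=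
  i ∈ X ∧ j ∈ X ∧ i ≠ j ∧
    ∀ k : Fin n, 0 < (k - i).val → (k - i).val < (j - i).val → k ∉ X

/-- The number of vertices in the gap `A_{i,j} = {i+1, …, j-1}`. -/
def gapSize {n : ℕ} (i j : Fin n) : ℕ := (j - i).val - 1

/-- The edge cover number `β'(G)`: the least number of edges of `G` covering all
vertices. -/
noncomputable def edgeCoverNum {V : Type*} [Fintype V] (G : SimpleGraph V) : ℕ :=
  sInf {n | ∃ F : Finset (Sym2 V), F.card = n ∧ ↑F ⊆ G.edgeSet ∧ ∀ v : V, ∃ e ∈ F, v ∈ e}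


section Helpers

open SimpleGraph
open Fin.CommRing

variable {n : ℕ}

private lemma fin_val_pos [NeZero n] {x : Fin n} (h : x ≠ 0) : 0 < x.val := by
  rcases Nat.eq_zero_or_pos x.val with h0 | h0
  · exact absurd (Fin.ext h0 : x = 0) h
  · exact h0

private lemma fin_cast_val [NeZero n] {k : ℕ} (hk : k < n) : ((k : Fin n)).val = k := by
  rw [Fin.val_natCast]; exact Nat.mod_eq_of_lt hk

private lemma cyc_adj_iff (hn : 7 ≤ n) [NeZero n] (a b : Fin n) :
    (SimpleGraph.cycleGraph n).Adj a b ↔ (b = a + 1 ∨ b = a - 1) := by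
  rw [SimpleGraph.cycleGraph_adj']
  have h1 : ((1 : Fin n)).val = 1 := by
    rw [Fin.val_one']; exact Nat.mod_eq_of_lt (by omega)
  constructor
  · rintro (h | h)
    · right
      have : a - b = 1 := Fin.ext (by rw [h, h1])
      linear_combination -this
    · left
      have : b - a = 1 := Fin.ext (by rw [h, h1])
      linear_combination this
  · rintro (rfl | rfl)
    · right; rw [show a + 1 - a = 1 by ring, h1]
    · left; rw [show a - (a - 1) = 1 by ring, h1]

private lemma wheel_adj_none (hn : 7 ≤ n) (a : Fin n) : (wheel n).Adj none (some a) := by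
  refine ⟨by simp, Or.inl (Or.inl rfl)⟩

private lemma wheel_adj_some (hn : 7 ≤ n) (a b : Fin n) :
    (wheel n).Adj (some a) (some b) ↔ (SimpleGraph.cycleGraph n).Adj a b := by
  constructor
  · rintro ⟨hne, h | h⟩
    · rcases h with h | ⟨w, w', hw, hw', hadj⟩
      · exact absurd h (by simp)
      · rw [Option.some.injEq] at hw hw'; rw [← hw, ← hw'] at hadj; exact hadj
    · rcases h with h | ⟨w, w', hw, hw', hadj⟩
      · exact absurd h (by simp)
      · rw [Option.some.injEq] at hw hw'; rw [← hw, ← hw'] at hadj; exact hadj.symm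
  · intro h
    exact ⟨by simpa using h.ne, Or.inl (Or.inr ⟨a, b, rfl, rfl, h⟩)⟩

private lemma wheel_dist (hn : 7 ≤ n) (a t : Fin n) :
    (wheel n).dist (some a) (some t) =
      if a = t then 0 else if (SimpleGraph.cycleGraph n).Adj a t then 1 else 2 := by
  split_ifs with he ha
  · rw [he, SimpleGraph.dist_self]
  · exact SimpleGraph.dist_eq_one_iff_adj.mpr ((wheel_adj_some hn a t).mpr ha)
  · have hreach : (wheel n).Reachable (some a) (some t) :=
      ⟨SimpleGraph.Walk.cons ((wheel_adj_none hn a).symm)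
        (SimpleGraph.Walk.cons (wheel_adj_none hn t) SimpleGraph.Walk.nil)⟩
    have hle : (wheel n).dist (some a) (some t) ≤ 2 := by
      refine le_trans (SimpleGraph.dist_le (SimpleGraph.Walk.cons
        ((wheel_adj_none hn a).symm) (SimpleGraph.Walk.cons
          (wheel_adj_none hn t) SimpleGraph.Walk.nil))) ?_
      simp
    have h0 : (wheel n).dist (some a) (some t) ≠ 0 := by
      intro h
      rcases SimpleGraph.dist_eq_zero_iff_eq_or_not_reachable.mp h with h' | h'
      · exact he (by simpa using h')
      · exact h' hreach
    have h1 : (wheel n).dist (some a) (some t) ≠ 1 := by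
      intro h
      exact ha ((wheel_adj_some hn a t).mp (SimpleGraph.dist_eq_one_iff_adj.mp h))
    omega

/-- Run lemma: a run of `m` consecutive vertices outside `X` lies in a gap. -/
private lemma run_lemma [NeZero n] (X : Finset (Fin n)) (hX : 2 ≤ X.card)
    (c : Fin n) (m : ℕ) (hm : 1 ≤ m)
    (hrun : ∀ s : ℕ, s < m → c + (s : Fin n) ∉ X) :
    ∃ (p q : ℕ), IsGap X (c - (p : Fin n)) (c + (q : Fin n)) ∧ 1 ≤ p ∧ m ≤ q ∧
      p + q < n ∧ (c + (q : Fin n) - (c - (p : Fin n))).val = p + q ∧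
      (∀ s : ℕ, s < q → c + (s : Fin n) ∉ X) ∧
      (∀ s : ℕ, 0 < s → s < p → c - (s : Fin n) ∉ X) := by
  classical
  have hc : c ∉ X := by simpa using hrun 0 hm
  obtain ⟨x, hx⟩ : X.Nonempty := Finset.card_pos.mp (by omega)
  have hxc : x ≠ c := fun h => hc (h ▸ hx)
  -- q : least k with c + k ∈ X
  have hQex : ∃ k : ℕ, c + (k : Fin n) ∈ X :=
    ⟨(x - c).val, by rwa [Fin.cast_val_eq_self, show c + (x - c) = x by ring]⟩
  set q := Nat.find hQex with hqdef
  have hQq : c + (q : Fin n) ∈ X := Nat.find_spec hQex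
  have hQmin : ∀ s : ℕ, s < q → c + (s : Fin n) ∉ X := fun s hs => Nat.find_min hQex hs
  have hmq : m ≤ q := by
    by_contra h
    exact hrun q (by omega) hQq
  -- p : least k with 0 < k and c - k ∈ X
  have hPex : ∃ k : ℕ, 0 < k ∧ c - (k : Fin n) ∈ X := by
    refine ⟨(c - x).val, fin_val_pos (sub_ne_zero.mpr (fun h => hxc h.symm)), ?_⟩
    rwa [Fin.cast_val_eq_self, show c - (c - x) = x by ring]
  set p := Nat.find hPex with hpdef
  obtain ⟨hp1, hPp⟩ : 0 < p ∧ c - (p : Fin n) ∈ X := Nat.find_spec hPex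
  have hPmin : ∀ s : ℕ, 0 < s → s < p → c - (s : Fin n) ∉ X := by
    intro s hs0 hsp hmem
    exact Nat.find_min hPex hsp ⟨hs0, hmem⟩
  have hq1 : 1 ≤ q := le_trans hm hmq
  -- p + q < n
  have hpqn : p + q < n := by
    by_contra hle
    push_neg at hle
    have hsub : X ⊆ {c - (p : Fin n)} := by
      intro y hy
      rw [Finset.mem_singleton]
      set t := (y - c).val with htdef
      have htn : t < n := (y - c).isLt
      have hyc : y = c + (t : Fin n) := by
        rw [htdef, Fin.cast_val_eq_self]; ring
      have htq : q ≤ t := by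
        by_contra h
        push_neg at h
        exact hQmin t h (hyc ▸ hy)
      have ht0 : 0 < t := by omega
      have hyc2 : y = c - ((n - t : ℕ) : Fin n) := by
        have hcast : ((t : ℕ) : Fin n) + ((n - t : ℕ) : Fin n) = 0 := by
          rw [← Nat.cast_add, show t + (n - t) = n by omega, Fin.natCast_self]
        rw [hyc, show c + ((t : ℕ) : Fin n) = c - ((n - t : ℕ) : Fin n) by
          linear_combination hcast]
      have hnp : p ≤ n - t := by
        by_contra h
        push_neg at h
        exact hPmin (n - t) (by omega) h (hyc2 ▸ hy)
      have : n - t = p := by omega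
      rw [hyc2, this]
    have := Finset.card_le_card hsub
    simp at this
    omega
  have hpn : p < n := by omega
  have hqn : q < n := by omega
  have hval : (c + (q : Fin n) - (c - (p : Fin n))).val = p + q := by
    rw [show c + (q : Fin n) - (c - (p : Fin n)) = ((p + q : ℕ) : Fin n) by
      push_cast; ring]
    exact fin_cast_val hpqn
  refine ⟨p, q, ⟨hPp, hQq, ?_, ?_⟩, hp1, hmq, hpqn, hval, hQmin, hPmin⟩
  · intro h
    have : (c + (q : Fin n) - (c - (p : Fin n))).val = 0 := by
      rw [← h]; simp
    omega
  · intro k hk0 hklt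
    rw [hval] at hklt
    set t := (k - (c - (p : Fin n))).val with htdef
    have hk : k = c - (p : Fin n) + (t : Fin n) := by
      rw [htdef, Fin.cast_val_eq_self]; ring
    rcases lt_or_ge t p with h | h
    · have : k = c - ((p - t : ℕ) : Fin n) := by
        rw [hk, Nat.cast_sub h.le]; ring
      rw [this]
      exact hPmin (p - t) (by omega) (by omega)
    · have : k = c + ((t - p : ℕ) : Fin n) := by
        rw [hk, Nat.cast_sub h]; ring
      rw [this]
      exact hQmin (t - p) (by omega)

/-- Case B: `b = a + 2`. -/
private lemma caseB (hn : 7 ≤ n) [NeZero n] (X : Finset (Fin n)) (hX : 2 ≤ X.card)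
    (h1 : ∀ i j : Fin n, IsGap X i j → gapSize i j ≤ 4)
    (h3 : ∀ i j : Fin n, IsGap X i j → 2 ≤ gapSize i j →
      (∀ h : Fin n, IsGap X h i → gapSize h i ≤ 1) ∧
      (∀ k : Fin n, IsGap X j k → gapSize j k ≤ 1))
    (a : Fin n) (hm1 : a - 1 ∉ X) (h0 : a ∉ X) (h2' : a + 2 ∉ X) (h3' : a + 3 ∉ X) :
    False := by
  by_cases hmid : a + 1 ∈ X
  · -- gap ending at a+1 and gap starting at a+1, both of size ≥ 2
    obtain ⟨p, q, hgap, hp1, hmq, hpqn, hval, hQmin, _⟩ :=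
      run_lemma X hX (a - 1) 2 (by omega) (by
        intro s hs
        interval_cases s
        · simpa using hm1
        · rw [show a - 1 + ((1:ℕ) : Fin n) = a by push_cast; ring]; exact h0)
    have hq2 : q = 2 := by
      by_contra h
      have : 2 < q := by omega
      exact hQmin 2 this (by
        rw [show a - 1 + ((2:ℕ) : Fin n) = a + 1 by push_cast; ring]; exact hmid)
    rw [hq2, show a - 1 + ((2:ℕ) : Fin n) = a + 1 by push_cast; ring] at hgap hval
    obtain ⟨p₂, q₂, hgap₂, hp₂1, hmq₂, hpqn₂, hval₂, _, hPmin₂⟩ :=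
      run_lemma X hX (a + 2) 2 (by omega) (by
        intro s hs
        interval_cases s
        · simpa using h2'
        · rw [show a + 2 + ((1:ℕ) : Fin n) = a + 3 by push_cast; ring]; exact h3')
    have hp₂ : p₂ = 1 := by
      by_contra h
      have : 1 < p₂ := by omega
      exact hPmin₂ 1 (by omega) this (by
        rw [show a + 2 - ((1:ℕ) : Fin n) = a + 1 by push_cast; ring]; exact hmid)
    rw [hp₂, show a + 2 - ((1:ℕ) : Fin n) = a + 1 by push_cast; ring] at hgap₂ hval₂
    have hsz1 : 2 ≤ gapSize (a - 1 - (p : Fin n)) (a + 1) := by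
      rw [gapSize, hval]; omega
    have := (h3 _ _ hgap hsz1).2 _ hgap₂
    rw [gapSize, hval₂] at this
    omega
  · -- run of length 5
    obtain ⟨p, q, hgap, hp1, hmq, hpqn, hval, _, _⟩ :=
      run_lemma X hX (a - 1) 5 (by omega) (by
        intro s hs
        interval_cases s
        · simpa using hm1
        · rw [show a - 1 + ((1:ℕ) : Fin n) = a by push_cast; ring]; exact h0
        · rw [show a - 1 + ((2:ℕ) : Fin n) = a + 1 by push_cast; ring]; exact hmid
        · rw [show a - 1 + ((3:ℕ) : Fin n) = a + 2 by push_cast; ring]; exact h2'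
        · rw [show a - 1 + ((4:ℕ) : Fin n) = a + 3 by push_cast; ring]; exact h3')
    have := h1 _ _ hgap
    rw [gapSize, hval] at this
    omega

/-- Case A: two runs of length 3. -/
private lemma caseA (hn : 7 ≤ n) [NeZero n] (X : Finset (Fin n)) (hX : 2 ≤ X.card)
    (h1 : ∀ i j : Fin n, IsGap X i j → gapSize i j ≤ 4)
    (h2 : ∀ i j i' j' : Fin n, IsGap X i j → IsGap X i' j' →
      3 ≤ gapSize i j → 3 ≤ gapSize i' j' → i = i' ∧ j = j')
    (a b : Fin n) (hne : b ≠ a) (hba1 : b ≠ a + 1) (hbm1 : b ≠ a - 1)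
    (ham1 : a - 1 ∉ X) (ha0 : a ∉ X) (hap1 : a + 1 ∉ X)
    (hbm1' : b - 1 ∉ X) (hb0 : b ∉ X) (hbp1 : b + 1 ∉ X) : False := by
  obtain ⟨p₁, q₁, hgap₁, hp₁, hmq₁, hpqn₁, hval₁, _, _⟩ :=
    run_lemma X hX (a - 1) 3 (by omega) (by
      intro s hs
      interval_cases s
      · simpa using ham1
      · rw [show a - 1 + ((1:ℕ) : Fin n) = a by push_cast; ring]; exact ha0
      · rw [show a - 1 + ((2:ℕ) : Fin n) = a + 1 by push_cast; ring]; exact hap1)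
  obtain ⟨p₂, q₂, hgap₂, hp₂, hmq₂, hpqn₂, hval₂, _, _⟩ :=
    run_lemma X hX (b - 1) 3 (by omega) (by
      intro s hs
      interval_cases s
      · simpa using hbm1'
      · rw [show b - 1 + ((1:ℕ) : Fin n) = b by push_cast; ring]; exact hb0
      · rw [show b - 1 + ((2:ℕ) : Fin n) = b + 1 by push_cast; ring]; exact hbp1)
  have hs₁ : 3 ≤ gapSize (a - 1 - (p₁ : Fin n)) (a - 1 + (q₁ : Fin n)) := by
    rw [gapSize, hval₁]; omega
  have hs₂ : 3 ≤ gapSize (b - 1 - (p₂ : Fin n)) (b - 1 + (q₂ : Fin n)) := by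
    rw [gapSize, hval₂]; omega
  have hb₁ := h1 _ _ hgap₁
  have hb₂ := h1 _ _ hgap₂
  rw [gapSize, hval₁] at hb₁
  rw [gapSize, hval₂] at hb₂
  have hp₁2 : p₁ ≤ 2 := by omega
  have hp₂2 : p₂ ≤ 2 := by omega
  have heq := (h2 _ _ _ _ hgap₁ hgap₂ hs₁ hs₂).1
  interval_cases p₁ <;> interval_cases p₂ <;> push_cast at heq
  · exact hne (by linear_combination -heq)
  · exact hba1 (by linear_combination -heq)
  · exact hbm1 (by linear_combination -heq)
  · exact hne (by linear_combination -heq)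

end Helpers

open Fin.CommRing

/-- If `X ⊆ V(Cₙ)`, `n ≥ 7`, `|X| ≥ 2`, every gap of `X` has at
most `4` vertices, at most one gap has `3` or more vertices, and gaps with at
least `2` vertices have neighboring gaps with at most one vertex, then `X` is
a nonlocal resolving set of `W_{1,n}`. -/
theorem stmt_13 (n : ℕ) (hn : 7 ≤ n) (X : Finset (Fin n)) (hX : 2 ≤ X.card)
    (h1 : ∀ i j : Fin n, IsGap X i j → gapSize i j ≤ 4)
    (h2 : ∀ i j i' j' : Fin n, IsGap X i j → IsGap X i' j' →
      3 ≤ gapSize i j → 3 ≤ gapSize i' j' → i = i' ∧ j = j')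
    (h3 : ∀ i j : Fin n, IsGap X i j → 2 ≤ gapSize i j →
      (∀ h : Fin n, IsGap X h i → gapSize h i ≤ 1) ∧
      (∀ k : Fin n, IsGap X j k → gapSize j k ≤ 1)) :
    IsNLResolving (wheel n) (X.image some) := by
  haveI : NeZero n := ⟨by omega⟩
  intro u v huv hadj
  by_contra hres
  push_neg at hres
  -- u and v are rim vertices
  obtain ⟨a, rfl⟩ : ∃ a, u = some a := by
    cases u with
    | none =>
      cases v with
      | none => exact absurd rfl huv
      | some b => exact absurd (wheel_adj_none hn b) hadj
    | some a => exact ⟨a, rfl⟩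
  obtain ⟨b, rfl⟩ : ∃ b, v = some b := by
    cases v with
    | none => exact absurd ((wheel_adj_none hn a).symm) hadj
    | some b => exact ⟨b, rfl⟩
  have hab : a ≠ b := fun h => huv (by rw [h])
  have hcadj : ¬ (SimpleGraph.cycleGraph n).Adj a b := fun h =>
    hadj ((wheel_adj_some hn a b).mpr h)
  rw [cyc_adj_iff hn] at hcadj
  push_neg at hcadj
  obtain ⟨hba1, hbm1⟩ := hcadj
  -- key fact about members of X
  have key : ∀ t ∈ X, t ≠ a ∧ t ≠ b ∧
      ((SimpleGraph.cycleGraph n).Adj a t ↔ (SimpleGraph.cycleGraph n).Adj b t) := by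
    intro t ht
    have hEq := hres (some t) (Finset.mem_image_of_mem some ht)
    rw [wheel_dist hn a t, wheel_dist hn b t] at hEq
    have hta : t ≠ a := by
      rintro rfl
      rw [if_pos rfl, if_neg (fun h => hab h.symm)] at hEq
      split_ifs at hEq <;> omega
    have htb : t ≠ b := by
      rintro rfl
      rw [if_neg hab, if_pos rfl] at hEq
      split_ifs at hEq <;> omega
    rw [if_neg (show ¬ (a = t) from fun h => hta h.symm),
      if_neg (show ¬ (b = t) from fun h => htb h.symm)] at hEq
    refine ⟨hta, htb, ?_⟩
    constructor <;> intro hh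
    · by_contra hc; rw [if_pos hh, if_neg hc] at hEq; omega
    · by_contra hc; rw [if_neg hc, if_pos hh] at hEq; omega
  have haX : a ∉ X := fun h => (key a h).1 rfl
  have hbX : b ∉ X := fun h => (key b h).2.1 rfl
  -- adjacency translations
  have hadjA : ∀ t, (SimpleGraph.cycleGraph n).Adj a t ↔ (t = a + 1 ∨ t = a - 1) :=
    fun t => cyc_adj_iff hn a t
  have hadjB : ∀ t, (SimpleGraph.cycleGraph n).Adj b t ↔ (t = b + 1 ∨ t = b - 1) :=
    fun t => cyc_adj_iff hn b t
  have hfour : ((4 : ℕ) : Fin n) ≠ 0 := by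
    intro h
    have := fin_cast_val (n := n) (k := 4) (by omega)
    rw [h] at this
    simp at this
  have hap1 : a + 1 ∈ X → b = a + 2 := by
    intro h
    have h' := ((key _ h).2.2).mp ((hadjA _).mpr (Or.inl rfl))
    rcases (hadjB _).mp h' with h'' | h''
    · exact absurd (by linear_combination h'') hab
    · linear_combination -h''
  have ham1 : a - 1 ∈ X → b = a - 2 := by
    intro h
    have h' := ((key _ h).2.2).mp ((hadjA _).mpr (Or.inr rfl))
    rcases (hadjB _).mp h' with h'' | h''
    · linear_combination -h''
    · exact absurd (by linear_combination h'') hab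
  have hbp1 : b + 1 ∈ X → a = b + 2 := by
    intro h
    have h' := ((key _ h).2.2).mpr ((hadjB _).mpr (Or.inl rfl))
    rcases (hadjA _).mp h' with h'' | h''
    · exact absurd (by linear_combination h'') hab.symm
    · linear_combination -h''
  have hbm1' : b - 1 ∈ X → a = b - 2 := by
    intro h
    have h' := ((key _ h).2.2).mpr ((hadjB _).mpr (Or.inr rfl))
    rcases (hadjA _).mp h' with h'' | h''
    · linear_combination -h''
    · exact absurd (by linear_combination h'') hab.symm
  by_cases hcase1 : b = a + 2
  · -- case B with center a
    refine caseB hn X hX h1 h3 a ?_ haX ?_ ?_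
    · intro h
      have := ham1 h
      rw [hcase1] at this
      exact hfour (by linear_combination this)
    · rwa [← hcase1]
    · intro h
      have : a + 3 = b + 1 := by rw [hcase1]; ring
      have := hbp1 (this ▸ h)
      rw [hcase1] at this
      exact hfour (by linear_combination -this)
  · by_cases hcase2 : a = b + 2
    · -- case B with center b
      refine caseB hn X hX h1 h3 b ?_ hbX ?_ ?_
      · intro h
        have := hbm1' h
        rw [hcase2] at this
        exact hfour (by linear_combination this)
      · rwa [← hcase2]
      · intro h
        have : b + 3 = a + 1 := by rw [hcase2]; ring
        have := hap1 (this ▸ h)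
        rw [hcase2] at this
        exact hfour (by linear_combination -this)
    · -- case A
      refine caseA hn X hX h1 h2 a b (Ne.symm hab) hba1 hbm1 ?_ haX ?_ ?_ hbX ?_
      · intro h
        exact hcase2 (by rw [ham1 h]; ring)
      · intro h
        exact hcase1 (hap1 h)
      · intro h
        exact hcase1 (by rw [hbm1' h]; ring)
      · intro h
        exact hcase2 (hbp1 h)
end

section
/- If G is a connected simple graph, then dim_nl(G) ≤ n(G) − ω(G), where n(G) is the number of vertices of G and ω(G) its clique number. In particular, if n(G) ≥ 2, then dim_nl(G) ≤ n(G) − 2. -/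
/-- For a connected graph `G`, `dim_nl(G) ≤ n(G) − ω(G)`; in
particular, if `n(G) ≥ 2`, then `dim_nl(G) ≤ n(G) − 2`. -/
theorem stmt_14 {V : Type*} [Fintype V] (G : SimpleGraph V) (hG : G.Connected) :
    nldim G ≤ Fintype.card V - G.cliqueNum ∧
      (2 ≤ Fintype.card V → nldim G ≤ Fintype.card V - 2) := by
  classical
  obtain ⟨K, hK⟩ := G.exists_isNClique_cliqueNum
  have hres : ∀ (K : Finset V), G.IsClique K → IsNLResolving G Kᶜ := by
    intro K hKc u v huv hadj
    have h : u ∈ Kᶜ ∨ v ∈ Kᶜ := by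
      by_contra h; push_neg at h
      simp only [Finset.mem_compl, not_not] at h
      exact hadj (hKc h.1 h.2 huv)
    rcases h with h | h
    · exact ⟨u, h, by
        rw [SimpleGraph.dist_self]
        exact fun hz => huv (hG.dist_eq_zero_iff.mp hz.symm).symm⟩
    · exact ⟨v, h, by
        rw [SimpleGraph.dist_self]
        exact fun hz => huv (hG.dist_eq_zero_iff.mp hz)⟩
  have hle : ∀ (K : Finset V), G.IsClique K → nldim G ≤ Fintype.card V - K.card := by
    intro K hKc
    have := Nat.sInf_le (show Kᶜ.card ∈ {n | ∃ X : Finset V, X.card = n ∧ IsNLResolving G X} from ⟨Kᶜ, rfl, hres K hKc⟩)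
    rwa [Finset.card_compl] at this
  constructor
  · have := hle K hK.1
    rwa [hK.2] at this
  · intro h2
    obtain ⟨u, v, hadj⟩ : ∃ u v, G.Adj u v := by
      obtain ⟨u, v, huv⟩ := Fintype.exists_pair_of_one_lt_card h2
      obtain ⟨w⟩ := hG.preconnected u v
      cases w with
      | nil => exact absurd rfl huv
      | cons h p => exact ⟨_, _, h⟩
    have hc : G.IsClique ({u, v} : Finset V) := by
      intro a ha b hb hab
      simp only [Finset.coe_insert, Finset.coe_singleton, Set.mem_insert_iff,
        Set.mem_singleton_iff] at ha hb
      rcases ha with rfl | rfl <;> rcases hb with rfl | rfl <;>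
        first | exact absurd rfl hab | exact hadj | exact hadj.symm
    have := hle {u, v} hc
    rwa [Finset.card_pair hadj.ne] at this
end

section
/- For all integers s ≥ 1 and t ≥ 2, the nonlocal metric dimension of the complete bipartite graph K_{s,t} equals s + t − 2. -/
open SimpleGraph Sum in
private lemma cb_adj {s t : ℕ} (a : Fin s) (b : Fin t) :
    (completeBipartiteGraph (Fin s) (Fin t)).Adj (inl a) (inr b) := by
  simp [completeBipartiteGraph]

open SimpleGraph Sum in
private lemma cb_not_adj_ll {s t : ℕ} (a b : Fin s) :
    ¬ (completeBipartiteGraph (Fin s) (Fin t)).Adj (inl a) (inl b) := by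
  simp [completeBipartiteGraph]

open SimpleGraph Sum in
private lemma cb_not_adj_rr {s t : ℕ} (a b : Fin t) :
    ¬ (completeBipartiteGraph (Fin s) (Fin t)).Adj (inr a : Fin s ⊕ Fin t) (inr b) := by
  simp [completeBipartiteGraph]

open SimpleGraph Sum in
private lemma dist_ll {s t : ℕ} (ht : 0 < t) {a b : Fin s} (hab : a ≠ b) :
    (completeBipartiteGraph (Fin s) (Fin t)).dist (inl a) (inl b) = 2 := by
  set G := completeBipartiteGraph (Fin s) (Fin t) with hG
  let w : G.Walk (inl a) (inl b) :=
    Walk.cons (cb_adj a ⟨0, ht⟩) (Walk.cons ((cb_adj b ⟨0, ht⟩).symm) Walk.nil)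
  have h2 : G.dist (inl a) (inl b) ≤ 2 := by
    simpa [w] using SimpleGraph.dist_le w
  have h0 : G.dist (inl a) (inl b) ≠ 0 := by
    intro h
    rcases SimpleGraph.dist_eq_zero_iff_eq_or_not_reachable.mp h with h' | h'
    · exact hab (by simpa using h')
    · exact h' w.reachable
  have h1 : G.dist (inl a) (inl b) ≠ 1 := by
    intro h
    exact cb_not_adj_ll a b (SimpleGraph.dist_eq_one_iff_adj.mp h)
  omega

open SimpleGraph Sum in
private lemma dist_rr {s t : ℕ} (hs : 0 < s) {a b : Fin t} (hab : a ≠ b) :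
    (completeBipartiteGraph (Fin s) (Fin t)).dist (inr a) (inr b) = 2 := by
  set G := completeBipartiteGraph (Fin s) (Fin t) with hG
  let w : G.Walk (inr a : Fin s ⊕ Fin t) (inr b) :=
    Walk.cons ((cb_adj ⟨0, hs⟩ a).symm) (Walk.cons (cb_adj ⟨0, hs⟩ b) Walk.nil)
  have h2 : G.dist (inr a : Fin s ⊕ Fin t) (inr b) ≤ 2 := by
    simpa [w] using SimpleGraph.dist_le w
  have h0 : G.dist (inr a : Fin s ⊕ Fin t) (inr b) ≠ 0 := by
    intro h
    rcases SimpleGraph.dist_eq_zero_iff_eq_or_not_reachable.mp h with h' | h'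
    · exact hab (by simpa using h')
    · exact h' w.reachable
  have h1 : G.dist (inr a : Fin s ⊕ Fin t) (inr b) ≠ 1 := by
    intro h
    exact cb_not_adj_rr a b (SimpleGraph.dist_eq_one_iff_adj.mp h)
  omega

open SimpleGraph Sum in
private lemma dist_lr {s t : ℕ} (a : Fin s) (b : Fin t) :
    (completeBipartiteGraph (Fin s) (Fin t)).dist (inl a) (inr b) = 1 :=
  SimpleGraph.dist_eq_one_iff_adj.mpr (cb_adj a b)

open SimpleGraph Sum in
private lemma dist_rl {s t : ℕ} (a : Fin s) (b : Fin t) :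
    (completeBipartiteGraph (Fin s) (Fin t)).dist (inr b) (inl a) = 1 :=
  SimpleGraph.dist_eq_one_iff_adj.mpr
    ((cb_adj a b).symm)

open SimpleGraph Sum in
private lemma lower_bound {s t : ℕ} (hs : 0 < s) (ht : 0 < t)
    {X : Finset (Fin s ⊕ Fin t)}
    (hX : IsNLResolving (completeBipartiteGraph (Fin s) (Fin t)) X) :
    s + t - 2 ≤ X.card := by
  set G := completeBipartiteGraph (Fin s) (Fin t) with hG
  have claimL : ∀ a b : Fin s, a ≠ b → inl a ∈ X ∨ inl b ∈ X := by
    intro a b hab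
    by_contra hc
    push_neg at hc
    obtain ⟨x, hxX, hdx⟩ := hX (inl a) (inl b) (by simp [hab]) (cb_not_adj_ll a b)
    apply hdx
    match x with
    | inl c =>
      have hca : a ≠ c := fun h => hc.1 (h ▸ hxX)
      have hcb : b ≠ c := fun h => hc.2 (h ▸ hxX)
      rw [dist_ll ht hca, dist_ll ht hcb]
    | inr d => rw [dist_lr, dist_lr]
  have claimR : ∀ a b : Fin t, a ≠ b → (inr a : Fin s ⊕ Fin t) ∈ X ∨ inr b ∈ X := by
    intro a b hab
    by_contra hc
    push_neg at hc
    obtain ⟨x, hxX, hdx⟩ := hX (inr a) (inr b) (by simp [hab]) (cb_not_adj_rr a b)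
    apply hdx
    match x with
    | inr c =>
      have hca : a ≠ c := fun h => hc.1 (h ▸ hxX)
      have hcb : b ≠ c := fun h => hc.2 (h ▸ hxX)
      rw [dist_rr hs hca, dist_rr hs hcb]
    | inl d =>
      rw [dist_rl, dist_rl]
  set L : Finset (Fin s ⊕ Fin t) := Finset.univ.image inl with hL
  set R : Finset (Fin s ⊕ Fin t) := Finset.univ.image inr with hR
  have hLcard : L.card = s := by
    rw [hL, Finset.card_image_of_injective _ Sum.inl_injective, Finset.card_univ,
      Fintype.card_fin]
  have hRcard : R.card = t := by
    rw [hR, Finset.card_image_of_injective _ Sum.inr_injective, Finset.card_univ,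
      Fintype.card_fin]
  have hL1 : (L \ X).card ≤ 1 := by
    rw [Finset.card_le_one]
    intro p hp q hq
    by_contra hpq
    rw [Finset.mem_sdiff, hL, Finset.mem_image] at hp hq
    obtain ⟨⟨a, -, rfl⟩, hpX⟩ := hp
    obtain ⟨⟨b, -, rfl⟩, hqX⟩ := hq
    have hab : a ≠ b := fun h => hpq (by rw [h])
    rcases claimL a b hab with h | h
    · exact hpX h
    · exact hqX h
  have hR1 : (R \ X).card ≤ 1 := by
    rw [Finset.card_le_one]
    intro p hp q hq
    by_contra hpq
    rw [Finset.mem_sdiff, hR, Finset.mem_image] at hp hq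
    obtain ⟨⟨a, -, rfl⟩, hpX⟩ := hp
    obtain ⟨⟨b, -, rfl⟩, hqX⟩ := hq
    have hab : a ≠ b := fun h => hpq (by rw [h])
    rcases claimR a b hab with h | h
    · exact hpX h
    · exact hqX h
  have e1 : (L ∩ X).card + (L \ X).card = L.card := Finset.card_inter_add_card_sdiff L X
  have e2 : (R ∩ X).card + (R \ X).card = R.card := Finset.card_inter_add_card_sdiff R X
  have hdisj : Disjoint (L ∩ X) (R ∩ X) := by
    rw [Finset.disjoint_left]
    intro p hp hq
    rw [Finset.mem_inter, hL, Finset.mem_image] at hp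
    rw [Finset.mem_inter, hR, Finset.mem_image] at hq
    obtain ⟨⟨a, -, rfl⟩, -⟩ := hp
    obtain ⟨⟨b, -, hb⟩, -⟩ := hq
    exact Sum.inl_ne_inr hb.symm
  have hsub : (L ∩ X) ∪ (R ∩ X) ⊆ X := by
    intro p hp
    rcases Finset.mem_union.mp hp with h | h
    · exact (Finset.mem_inter.mp h).2
    · exact (Finset.mem_inter.mp h).2
  have hle : (L ∩ X).card + (R ∩ X).card ≤ X.card := by
    rw [← Finset.card_union_of_disjoint hdisj]
    exact Finset.card_le_card hsub
  omega


/-- For `s ≥ 1` and `t ≥ 2`,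
`dim_nl(K_{s,t}) = s + t − 2`. -/
theorem stmt_15 (s t : ℕ) (hs : 1 ≤ s) (ht : 2 ≤ t) :
    nldim (completeBipartiteGraph (Fin s) (Fin t)) = s + t - 2 := by
  have hs0 : 0 < s := hs
  have ht0 : 0 < t := by omega
  set G := completeBipartiteGraph (Fin s) (Fin t) with hG
  set x0 : Fin s ⊕ Fin t := Sum.inl ⟨0, hs0⟩ with hx0
  set y0 : Fin s ⊕ Fin t := Sum.inr ⟨0, ht0⟩ with hy0
  set X0 : Finset (Fin s ⊕ Fin t) := Finset.univ \ {x0, y0} with hX0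
  have hcard : X0.card = s + t - 2 := by
    rw [hX0, Finset.card_sdiff_of_subset (Finset.subset_univ _)]
    have h2 : ({x0, y0} : Finset (Fin s ⊕ Fin t)).card = 2 := by
      rw [Finset.card_insert_of_notMem (by simp [hx0, hy0]), Finset.card_singleton]
    rw [h2, Finset.card_univ, Fintype.card_sum, Fintype.card_fin, Fintype.card_fin]
  have hres : IsNLResolving G X0 := by
    intro u v huv hadj
    match u, v with
    | Sum.inl a, Sum.inl b =>
      have hab : a ≠ b := fun h => huv (by rw [h])
      rcases eq_or_ne a ⟨0, hs0⟩ with ha | ha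
      · have hb0 : b ≠ ⟨0, hs0⟩ := fun h => hab (ha.trans h.symm)
        refine ⟨Sum.inl b, ?_, ?_⟩
        · simp only [hX0, Finset.mem_sdiff, Finset.mem_univ, true_and, Finset.mem_insert,
            Finset.mem_singleton, hx0, hy0]
          push_neg
          exact ⟨by simpa using hb0, by simp⟩
        · rw [dist_ll ht0 hab, SimpleGraph.dist_self]; omega
      · refine ⟨Sum.inl a, ?_, ?_⟩
        · simp only [hX0, Finset.mem_sdiff, Finset.mem_univ, true_and, Finset.mem_insert,
            Finset.mem_singleton, hx0, hy0]
          push_neg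
          exact ⟨by simpa using ha, by simp⟩
        · rw [dist_ll ht0 (Ne.symm hab), SimpleGraph.dist_self]; omega
    | Sum.inl a, Sum.inr b => exact absurd (cb_adj a b) hadj
    | Sum.inr b, Sum.inl a => exact absurd ((cb_adj a b).symm) hadj
    | Sum.inr a, Sum.inr b =>
      have hab : a ≠ b := fun h => huv (by rw [h])
      rcases eq_or_ne a ⟨0, ht0⟩ with ha | ha
      · have hb0 : b ≠ ⟨0, ht0⟩ := fun h => hab (ha.trans h.symm)
        refine ⟨Sum.inr b, ?_, ?_⟩
        · simp only [hX0, Finset.mem_sdiff, Finset.mem_univ, true_and, Finset.mem_insert,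
            Finset.mem_singleton, hx0, hy0]
          push_neg
          exact ⟨by simp, by simpa using hb0⟩
        · rw [dist_rr hs0 hab, SimpleGraph.dist_self]; omega
      · refine ⟨Sum.inr a, ?_, ?_⟩
        · simp only [hX0, Finset.mem_sdiff, Finset.mem_univ, true_and, Finset.mem_insert,
            Finset.mem_singleton, hx0, hy0]
          push_neg
          exact ⟨by simp, by simpa using ha⟩
        · rw [dist_rr hs0 (Ne.symm hab), SimpleGraph.dist_self]; omega
  have hmemS : s + t - 2 ∈ {n | ∃ X : Finset (Fin s ⊕ Fin t), X.card = n ∧ IsNLResolving G X} :=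
    ⟨X0, hcard, hres⟩
  refine le_antisymm (Nat.sInf_le hmemS) ?_
  have hne : {n | ∃ X : Finset (Fin s ⊕ Fin t), X.card = n ∧ IsNLResolving G X}.Nonempty :=
    ⟨s + t - 2, hmemS⟩
  obtain ⟨X, hXc, hXr⟩ := Nat.sInf_mem hne
  rw [nldim, ← hXc]
  exact lower_bound hs0 ht0 hXr
end

section
/- If G is a connected simple graph whose girth is at least 7 (i.e., G contains no cycle of length at most 6), then dim_nl(G) ≤ β'(G) − 1, where β'(G) is the edge cover number of G. -/
section helpers
open SimpleGraph
variable {V : Type*} {G : SimpleGraph V}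

private lemma no_c3 (hg : ∀ (v : V) (w : G.Walk v v), w.IsCycle → 7 ≤ w.length)
    {a b c : V} (h1 : G.Adj a b) (h2 : G.Adj b c) (h3 : G.Adj c a) : False := by
  have := hg a (.cons h1 (.cons h2 (.cons h3 .nil))) ?_
  · simp [Walk.length] at this
  · simp [Walk.isCycle_def, Walk.isTrail_def, h1.ne, h2.ne, h3.ne, h1.ne', h2.ne', h3.ne',
      h3.symm.ne, Sym2.eq, Sym2.rel_iff']

private lemma no_c4 (hg : ∀ (v : V) (w : G.Walk v v), w.IsCycle → 7 ≤ w.length)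
    {a b c d : V} (h1 : G.Adj a b) (h2 : G.Adj b c) (h3 : G.Adj c d) (h4 : G.Adj d a)
    (hac : a ≠ c) (hbd : b ≠ d) : False := by
  have := hg a (.cons h1 (.cons h2 (.cons h3 (.cons h4 .nil)))) ?_
  · simp [Walk.length] at this
  · simp [Walk.isCycle_def, Walk.isTrail_def, h1.ne, h2.ne, h3.ne, h4.ne,
      h1.ne', h2.ne', h3.ne', h4.ne', hac, hbd, hac.symm, hbd.symm, Sym2.eq, Sym2.rel_iff']

private lemma no_c6 (hg : ∀ (v : V) (w : G.Walk v v), w.IsCycle → 7 ≤ w.length)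
    {a b c d e f : V} (h1 : G.Adj a b) (h2 : G.Adj b c) (h3 : G.Adj c d) (h4 : G.Adj d e)
    (h5 : G.Adj e f) (h6 : G.Adj f a)
    (hac : a ≠ c) (had : a ≠ d) (hae : a ≠ e) (hbd : b ≠ d) (hbe : b ≠ e) (hbf : b ≠ f)
    (hce : c ≠ e) (hcf : c ≠ f) (hdf : d ≠ f) : False := by
  have := hg a (.cons h1 (.cons h2 (.cons h3 (.cons h4 (.cons h5 (.cons h6 .nil)))))) ?_
  · simp [Walk.length] at this
  · simp [Walk.isCycle_def, Walk.isTrail_def, h1.ne, h2.ne, h3.ne, h4.ne, h5.ne, h6.ne,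
      h1.ne', h2.ne', h3.ne', h4.ne', h5.ne', h6.ne',
      hac, had, hae, hbd, hbe, hbf, hce, hcf, hdf,
      hac.symm, had.symm, hae.symm, hbd.symm, hbe.symm, hbf.symm, hce.symm, hcf.symm, hdf.symm,
      Sym2.eq, Sym2.rel_iff']

private lemma dist2_mid (hG : G.Connected) {u v : V} (h : G.dist u v = 2) :
    ∃ w, G.Adj u w ∧ G.Adj w v := by
  obtain ⟨p, hp⟩ := (hG u v).exists_walk_length_eq_dist
  rw [h] at hp
  match p, hp with
  | .cons h1 (.cons h2 .nil), _ => exact ⟨_, h1, h2⟩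

private lemma dist_two_of (hG : G.Connected) {u v w : V} (h1 : G.Adj u w) (h2 : G.Adj w v)
    (hne : u ≠ v) (hna : ¬ G.Adj u v) : G.dist u v = 2 := by
  have hle : G.dist u v ≤ 2 := by
    simpa using dist_le (Walk.cons h1 (Walk.cons h2 .nil))
  have h0 : G.dist u v ≠ 0 := by simp [hG.dist_eq_zero_iff, hne]
  have h1' : G.dist u v ≠ 1 := by simp [dist_eq_one_iff_adj, hna]
  omega

private lemma dist_ne_one' {u v : V} (hna : ¬ G.Adj u v) : G.dist u v ≠ 1 := by
  simp [dist_eq_one_iff_adj, hna]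

private lemma resCC (hg : ∀ (v : V) (w : G.Walk v v), w.IsCycle → 7 ≤ w.length)
    {X : Finset V} {c c' lc lc' : V}
    (hcc : c ≠ c') (hna : ¬ G.Adj c c') (hl : lc ∈ X) (hl' : lc' ∈ X)
    (h1 : G.Adj c lc) (h2 : G.Adj c' lc') (hll : lc ≠ lc') :
    ∃ x ∈ X, G.dist c x ≠ G.dist c' x := by
  by_cases ha : G.Adj c' lc
  · by_cases hb : G.Adj c lc'
    · exact (no_c4 hg h1 ha.symm h2 hb.symm hcc hll).elim
    · refine ⟨lc', hl', ?_⟩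
      rw [show G.dist c' lc' = 1 from dist_eq_one_iff_adj.mpr h2]
      exact dist_ne_one' hb
  · refine ⟨lc, hl, ?_⟩
    rw [show G.dist c lc = 1 from dist_eq_one_iff_adj.mpr h1]
    exact (dist_ne_one' ha).symm

private lemma main_wrap (hG : G.Connected) (X : Finset V)
    (h : ∀ u v : V, u ≠ v → ¬ G.Adj u v → u ∉ X → v ∉ X → ∃ x ∈ X, G.dist u x ≠ G.dist v x) :
    IsNLResolving G X := by
  intro u v hne hna
  by_cases hu : u ∈ X
  · refine ⟨u, hu, ?_⟩
    rw [dist_self]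
    intro h0
    exact hne ((hG.dist_eq_zero_iff).mp h0.symm).symm
  by_cases hv : v ∈ X
  · refine ⟨v, hv, ?_⟩
    rw [dist_self]
    intro h0
    exact hne ((hG.dist_eq_zero_iff).mp h0)
  · exact h u v hne hna hu hv

private lemma cross_aux {G : SimpleGraph V} (F : Finset (Sym2 V))
    (hdis : ∀ e ∈ F, ∀ f ∈ F, e ≠ f → ∀ v, v ∈ e → v ∈ f → False)
    (hFcov : ∀ v : V, ∃ e ∈ F, v ∈ e) :
    ∀ {x y : V} (_ : G.Walk x y) (ex : Sym2 V), ex ∈ F → ∀ ey ∈ F, x ∈ ex → y ∈ ey → ex ≠ ey →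
      ∃ a b, G.Adj a b ∧ ∃ f1 ∈ F, ∃ f2 ∈ F, f1 ≠ f2 ∧ a ∈ f1 ∧ b ∈ f2
  | x, _, .nil, ex, hex, ey, hey, hx, hy, hne => (hdis ex hex ey hey hne _ hx hy).elim
  | x, y, .cons (v := v') h p, ex, hex, ey, hey, hx, hy, hne => by
    obtain ⟨ev, hev, hvev⟩ := hFcov v'
    by_cases hc : ex = ev
    · exact cross_aux F hdis hFcov p ev hev ey hey hvev hy (hc ▸ hne)
    · exact ⟨x, v', h, ex, hex, ev, hev, hc, hx, hvev⟩

end helpers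

section
open SimpleGraph
/-- If `G` is a connected graph of girth at least `7` (no cycle
of length at most `6`), then `dim_nl(G) ≤ β'(G) − 1`. -/
theorem stmt_17 {V : Type*} [Fintype V] (G : SimpleGraph V) (hG : G.Connected)
    (hn : 2 ≤ Fintype.card V)
    (hgirth : ∀ (v : V) (w : G.Walk v v), w.IsCycle → 7 ≤ w.length) :
    nldim G ≤ edgeCoverNum G - 1 := by
  classical
  haveI hV : Nonempty V := Fintype.card_pos_iff.mp (by omega)
  have hnbr : ∀ v : V, ∃ w, G.Adj v w := by
    intro v
    obtain ⟨u, hu⟩ := Fintype.exists_ne_of_one_lt_card (by omega) v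
    obtain ⟨p⟩ := hG.preconnected v u
    cases p with
    | nil => exact absurd rfl hu
    | cons h q => exact ⟨_, h⟩
  have hSmem : edgeCoverNum G ∈
      {n | ∃ F : Finset (Sym2 V), F.card = n ∧ ↑F ⊆ G.edgeSet ∧ ∀ v : V, ∃ e ∈ F, v ∈ e} := by
    apply Nat.sInf_mem
    refine ⟨G.edgeFinset.card, G.edgeFinset, rfl, by simp, fun v => ?_⟩
    obtain ⟨w, hw⟩ := hnbr v
    exact ⟨s(v, w), by simpa using hw, Sym2.mem_mk_left v w⟩
  obtain ⟨F, hFcard, hFsub, hFcov⟩ := hSmem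
  -- privacy
  have hpriv : ∀ e ∈ F, ∃ p ∈ e, ∀ e' ∈ F, p ∈ e' → e' = e := by
    intro e he
    by_contra hcon
    push_neg at hcon
    have hcov' : ∀ v : V, ∃ e' ∈ F.erase e, v ∈ e' := by
      intro v
      obtain ⟨f, hf, hvf⟩ := hFcov v
      by_cases hfe : f = e
      · subst hfe
        obtain ⟨e', he', hve', hne'⟩ := hcon v hvf
        exact ⟨e', Finset.mem_erase.mpr ⟨hne', he'⟩, hve'⟩
      · exact ⟨f, Finset.mem_erase.mpr ⟨hfe, hf⟩, hvf⟩
    have hle : edgeCoverNum G ≤ (F.erase e).card := by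
      apply Nat.sInf_le
      exact ⟨F.erase e, rfl, (Finset.coe_subset.mpr (Finset.erase_subset _ _)).trans hFsub, hcov'⟩
    rw [Finset.card_erase_of_mem he, hFcard] at hle
    have hpos : 0 < edgeCoverNum G := by
      rw [← hFcard]; exact Finset.card_pos.mpr ⟨e, he⟩
    omega
  have hlf0 : ∀ e : Sym2 V, ∃ p : V, e ∈ F → (p ∈ e ∧ ∀ e' ∈ F, p ∈ e' → e' = e) := by
    intro e
    by_cases he : e ∈ F
    · obtain ⟨p, hp1, hp2⟩ := hpriv e he
      exact ⟨p, fun _ => ⟨hp1, hp2⟩⟩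
    · exact ⟨Classical.arbitrary V, fun h => absurd h he⟩
  choose lf hlf using hlf0
  have hct0 : ∀ e : Sym2 V, ∃ c : V, e ∈ F →
      (G.Adj (lf e) c ∧ ∀ v, v ∈ e ↔ v = lf e ∨ v = c) := by
    intro e
    by_cases he : e ∈ F
    · have hmem := (hlf e he).1
      have hspec : s(lf e, Sym2.Mem.other' hmem) = e := Sym2.other_spec' hmem
      refine ⟨Sym2.Mem.other' hmem, fun _ => ⟨?_, ?_⟩⟩
      · have he' : e ∈ G.edgeSet := hFsub (by exact_mod_cast he)
        rw [← hspec] at he'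
        exact he'
      · intro v
        have hmi := Sym2.mem_iff (a := v) (b := lf e) (c := Sym2.Mem.other' hmem)
        rw [hspec] at hmi
        exact hmi
    · exact ⟨Classical.arbitrary V, fun h => absurd h he⟩
  choose ct hct using hct0
  have hadjE : ∀ e ∈ F, G.Adj (lf e) (ct e) := fun e he => (hct e he).1
  have hmemIff : ∀ e ∈ F, ∀ v, v ∈ e ↔ v = lf e ∨ v = ct e := fun e he => (hct e he).2
  have hlfmem : ∀ e ∈ F, lf e ∈ e := fun e he => (hlf e he).1
  have hprv : ∀ e ∈ F, ∀ e' ∈ F, lf e ∈ e' → e' = e := fun e he => (hlf e he).2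
  have hctmem : ∀ e ∈ F, ct e ∈ e := fun e he => (hmemIff e he _).2 (Or.inr rfl)
  have hlfinj : ∀ e ∈ F, ∀ e' ∈ F, lf e = lf e' → e = e' := by
    intro e he e' he' h
    exact (hprv e he e' he' (h ▸ hlfmem e' he')).symm
  have hctlf : ∀ e ∈ F, ∀ e' ∈ F, ct e ≠ lf e' := by
    intro e he e' he' h
    have h2 : e = e' := hprv e' he' e he (h ▸ hctmem e he)
    subst h2
    exact (hadjE e he).ne h.symm
  have hpartner : ∀ (w : V) (e : Sym2 V), e ∈ F → w ∈ e →
      ∃ p, G.Adj w p ∧ p ∈ e ∧ (∀ v ∈ e, v = w ∨ v = p) := by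
    intro w e he hw
    rcases (hmemIff e he w).1 hw with rfl | rfl
    · exact ⟨ct e, hadjE e he, hctmem e he, fun v hv => (hmemIff e he v).1 hv⟩
    · refine ⟨lf e, (hadjE e he).symm, hlfmem e he, fun v hv => ?_⟩
      rcases (hmemIff e he v).1 hv with h | h
      · exact Or.inr h
      · exact Or.inl h
  by_cases hshare : ∃ e ∈ F, ∃ e' ∈ F, e ≠ e' ∧ ct e = ct e'
  · -- CASE I : some star has at least two leaves
    obtain ⟨e0, he0, e1, he1, hne01, hcteq⟩ := hshare
    set X : Finset V := (F.erase e0).image lf with hX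
    have hXcard : X.card = edgeCoverNum G - 1 := by
      rw [hX, Finset.card_image_of_injOn, Finset.card_erase_of_mem he0, hFcard]
      intro x hx y hy hxy
      exact hlfinj x (Finset.mem_of_mem_erase (Finset.mem_coe.mp hx))
        y (Finset.mem_of_mem_erase (Finset.mem_coe.mp hy)) hxy
    have hmemX : ∀ e ∈ F, e ≠ e0 → lf e ∈ X := by
      intro e he hne
      rw [hX]
      exact Finset.mem_image.mpr ⟨e, Finset.mem_erase.mpr ⟨hne, he⟩, rfl⟩
    have he1ne0 : e1 ≠ e0 := fun h => hne01 h.symm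
    have hyX : lf e1 ∈ X := hmemX e1 he1 he1ne0
    have hlc : G.Adj (lf e0) (ct e0) := hadjE e0 he0
    have hcy : G.Adj (ct e0) (lf e1) := by rw [hcteq]; exact (hadjE e1 he1).symm
    have hcleaf : ∀ e ∈ F, ∃ f ∈ F, f ≠ e0 ∧ ct f = ct e := by
      intro e he
      by_cases h : e = e0
      · exact ⟨e1, he1, he1ne0, by rw [h, ← hcteq]⟩
      · exact ⟨e, he, h, rfl⟩
    have res2 : ∀ e ∈ F, ∀ f ∈ F, ct e ≠ ct f → ¬ G.Adj (ct e) (ct f) →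
        ∃ x ∈ X, G.dist (ct e) x ≠ G.dist (ct f) x := by
      intro e he f hf hcc hna
      obtain ⟨e', he', hne', hcte⟩ := hcleaf e he
      obtain ⟨f', hf', hnf', hctf⟩ := hcleaf f hf
      have hef' : e' ≠ f' := by
        intro h
        rw [← hcte, ← hctf, h] at hcc
        exact hcc rfl
      refine resCC hgirth hcc hna (hmemX e' he' hne') (hmemX f' hf' hnf') ?_ ?_ ?_
      · rw [← hcte]; exact (hadjE e' he').symm
      · rw [← hctf]; exact (hadjE f' hf').symm
      · intro h; exact hef' (hlfinj e' he' f' hf' h)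
    have res1 : ∀ f ∈ F, lf e0 ≠ ct f → ¬ G.Adj (lf e0) (ct f) →
        ∃ x ∈ X, G.dist (lf e0) x ≠ G.dist (ct f) x := by
      intro f hf hnef hna
      have hfc : ct f ≠ ct e0 := by
        intro h
        exact hna (by rw [h]; exact hlc)
      obtain ⟨f', hf', hnf', hctf⟩ := hcleaf f hf
      have hadjc : G.Adj (ct f) (lf f') := by rw [← hctf]; exact (hadjE f' hf').symm
      by_cases hax : G.Adj (lf e0) (lf f')
      · have hney : lf e0 ≠ lf e1 := fun h => hne01 (hlfinj e0 he0 e1 he1 h)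
        have hnady : ¬ G.Adj (lf e0) (lf e1) := fun h => no_c3 hgirth hlc hcy h.symm
        have hd2 : G.dist (lf e0) (lf e1) = 2 := dist_two_of hG hlc hcy hney hnady
        have hf'e1 : f' ≠ e1 := by
          intro h
          rw [h] at hctf
          rw [← hctf, ← hcteq] at hfc
          exact hfc rfl
        have hyx : lf e1 ≠ lf f' := fun h => hf'e1 (hlfinj e1 he1 f' hf' h).symm
        have hcs_xc : ct e0 ≠ lf f' := hctlf e0 he0 f' hf'
        have hcf_lf : ∀ g ∈ F, ct f ≠ lf g := fun g hg => hctlf f hf g hg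
        have hd2' : G.dist (ct f) (lf e1) ≠ 2 := by
          intro h2
          obtain ⟨w, hw1, hw2⟩ := dist2_mid hG h2
          by_cases hwc : w = ct e0
          · subst hwc
            exact no_c4 hgirth hw1 hlc.symm hax hadjc.symm (hcf_lf e0 he0) hcs_xc
          by_cases hwl : w = lf e0
          · subst hwl
            exact hna hw1.symm
          by_cases hwx : w = lf f'
          · subst hwx
            exact no_c4 hgirth hw2 hcy.symm hlc.symm hax hcs_xc.symm hney.symm
          · exact no_c6 hgirth hw1 hw2 hcy.symm hlc.symm hax hadjc.symm
              (hcf_lf e1 he1) hfc (hcf_lf e0 he0) hwc hwl hwx hney.symm hyx hcs_xc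
        exact ⟨lf e1, hyX, by rw [hd2]; exact fun h => hd2' h.symm⟩
      · refine ⟨lf f', hmemX f' hf' hnf', ?_⟩
        rw [show G.dist (ct f) (lf f') = 1 from dist_eq_one_iff_adj.mpr hadjc]
        exact dist_ne_one' hax
    have hclass : ∀ w, w ∉ X → w = lf e0 ∨ ∃ e ∈ F, w = ct e := by
      intro w hw
      obtain ⟨e, he, hwe⟩ := hFcov w
      rcases (hmemIff e he w).1 hwe with h | h
      · by_cases h0 : e = e0
        · left; rw [h, h0]
        · exact absurd (h ▸ hmemX e he h0) hw
      · exact Or.inr ⟨e, he, h⟩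
    refine Nat.sInf_le ⟨X, hXcard, main_wrap hG X ?_⟩
    intro u v hne hna hu hv
    rcases hclass u hu with rfl | ⟨e, he, rfl⟩
    · rcases hclass v hv with h' | ⟨f, hf, rfl⟩
      · exact absurd h'.symm hne
      · exact res1 f hf hne hna
    · rcases hclass v hv with rfl | ⟨f, hf, rfl⟩
      · obtain ⟨x, hx, hd⟩ := res1 e he hne.symm (fun h => hna h.symm)
        exact ⟨x, hx, hd.symm⟩
      · exact res2 e he f hf hne hna
  · -- CASE II : all centers distinct, F is a perfect matching
    push_neg at hshare
    have hdis : ∀ e ∈ F, ∀ f ∈ F, e ≠ f → ∀ v, v ∈ e → v ∈ f → False := by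
      intro e he f hf hef v hv hv'
      rcases (hmemIff e he v).1 hv with h1 | h1 <;>
        rcases (hmemIff f hf v).1 hv' with h2 | h2
      · exact hef (hlfinj e he f hf (h1.symm.trans h2))
      · exact hctlf f hf e he (h2.symm.trans h1)
      · exact hctlf e he f hf (h1.symm.trans h2)
      · exact hshare e he f hf hef (h1.symm.trans h2)
    by_cases hcard1 : F.card = 1
    · obtain ⟨e, hFe⟩ := Finset.card_eq_one.mp hcard1
      refine Nat.sInf_le ⟨∅, ?_, main_wrap hG ∅ ?_⟩
      · rw [Finset.card_empty, ← hFcard, hcard1]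
      · intro u v hne hna _ _
        have he : e ∈ F := by rw [hFe]; exact Finset.mem_singleton_self e
        obtain ⟨eu, heu, hueu⟩ := hFcov u
        obtain ⟨ev, hev, hvev⟩ := hFcov v
        rw [hFe, Finset.mem_singleton] at heu hev
        have hu' : u ∈ e := heu ▸ hueu
        have hv' : v ∈ e := hev ▸ hvev
        rcases (hmemIff e he u).1 hu' with rfl | rfl <;>
          rcases (hmemIff e he v).1 hv' with rfl | rfl
        · exact absurd rfl hne
        · exact absurd (hadjE e he) hna
        · exact absurd (hadjE e he).symm hna
        · exact absurd rfl hne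
    · have hF2 : 1 < F.card := by
        have hpos : 0 < F.card := by
          obtain ⟨e, he, _⟩ := hFcov (Classical.arbitrary V)
          exact Finset.card_pos.mpr ⟨e, he⟩
        omega
      obtain ⟨ea, hea, eb, heb, heab⟩ := Finset.one_lt_card.mp hF2
      have cross : ∃ a b, G.Adj a b ∧ ∃ f1 ∈ F, ∃ f2 ∈ F, f1 ≠ f2 ∧ a ∈ f1 ∧ b ∈ f2 := by
        obtain ⟨p⟩ := hG.preconnected (lf ea) (lf eb)
        exact cross_aux F hdis hFcov p ea hea eb heb (hlfmem ea hea) (hlfmem eb heb) heab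
      obtain ⟨a, b, hab, e1, he1, e2, he2, he12, hae1, hbe2⟩ := cross
      obtain ⟨ell, haell, hellmem, he1char⟩ := hpartner a e1 he1 hae1
      obtain ⟨l2, hbl2, hl2mem, he2char⟩ := hpartner b e2 he2 hbe2
      have hsel0 : ∀ g : Sym2 V, ∃ pq : V × V, g ∈ F → g ≠ e1 → g ≠ e2 →
          (G.Adj pq.2 pq.1 ∧ pq.1 ∈ g ∧ pq.2 ∈ g ∧ (∀ v ∈ g, v = pq.1 ∨ v = pq.2) ∧
            ¬ G.Adj ell pq.1) := by
        intro g
        by_cases hg : g ∈ F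
        · by_cases hA : G.Adj ell (lf g)
          · refine ⟨(ct g, lf g), fun _ _ _ => ⟨hadjE g hg, hctmem g hg, hlfmem g hg, ?_, ?_⟩⟩
            · intro v hv
              rcases (hmemIff g hg v).1 hv with h | h
              · exact Or.inr h
              · exact Or.inl h
            · intro h
              exact no_c3 hgirth hA (hadjE g hg) h.symm
          · exact ⟨(lf g, ct g), fun _ _ _ => ⟨(hadjE g hg).symm, hlfmem g hg, hctmem g hg,
              fun v hv => (hmemIff g hg v).1 hv, hA⟩⟩
        · exact ⟨(Classical.arbitrary V, Classical.arbitrary V), fun h => absurd h hg⟩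
      choose sel hsel using hsel0
      -- the leaf function on F.erase e1
      set Lf : Sym2 V → V := fun g => if g = e2 then l2 else (sel g).1 with hLf
      have hLf2 : Lf e2 = l2 := by simp [hLf]
      have hLfo : ∀ g, g ≠ e2 → Lf g = (sel g).1 := by
        intro g h
        simp [hLf, h]
      have hLfmem : ∀ g ∈ F, g ≠ e1 → Lf g ∈ g := by
        intro g hg hg1
        by_cases hg2 : g = e2
        · rw [hg2, hLf2]
          exact hl2mem
        · rw [hLfo g hg2]
          exact (hsel g hg hg1 hg2).2.1
      set X : Finset V := (F.erase e1).image Lf with hX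
      have hXcard : X.card = edgeCoverNum G - 1 := by
        rw [hX, Finset.card_image_of_injOn, Finset.card_erase_of_mem he1, hFcard]
        intro x hx y hy hxy
        by_contra hnexy
        have hx' := Finset.mem_of_mem_erase (Finset.mem_coe.mp hx)
        have hy' := Finset.mem_of_mem_erase (Finset.mem_coe.mp hy)
        have hx1 : x ≠ e1 := (Finset.mem_erase.mp (Finset.mem_coe.mp hx)).1
        have hy1 : y ≠ e1 := (Finset.mem_erase.mp (Finset.mem_coe.mp hy)).1
        exact hdis x hx' y hy' hnexy (Lf x) (hLfmem x hx' hx1) (hxy ▸ hLfmem y hy' hy1)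
      have hmemX : ∀ g ∈ F, g ≠ e1 → Lf g ∈ X := by
        intro g hg h1
        rw [hX]
        exact Finset.mem_image.mpr ⟨g, Finset.mem_erase.mpr ⟨h1, hg⟩, rfl⟩
      have he21 : e2 ≠ e1 := he12.symm
      have hl2X : l2 ∈ X := by
        have := hmemX e2 he2 he21
        rwa [hLf2] at this
      have hlgX : ∀ g ∈ F, g ≠ e1 → g ≠ e2 → (sel g).1 ∈ X := by
        intro g hg h1 h2
        have := hmemX g hg h1
        rwa [hLfo g h2] at this
      -- distinctness helper
      have hne_of : ∀ {x y : V} {e f : Sym2 V}, e ∈ F → f ∈ F → e ≠ f →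
          x ∈ e → y ∈ f → x ≠ y := by
        intro x y e f he hf hef hx hy h
        exact hdis e he f hf hef x hx (h ▸ hy)
      -- classification
      have hclass : ∀ w, w ∉ X → w = ell ∨ w = a ∨ w = b ∨
          ∃ g ∈ F, g ≠ e1 ∧ g ≠ e2 ∧ w = (sel g).2 := by
        intro w hw
        obtain ⟨g, hg, hwg⟩ := hFcov w
        by_cases hg1 : g = e1
        · rcases he1char w (hg1 ▸ hwg) with rfl | rfl
          · exact Or.inr (Or.inl rfl)
          · exact Or.inl rfl
        by_cases hg2 : g = e2
        · rcases he2char w (hg2 ▸ hwg) with rfl | rfl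
          · exact Or.inr (Or.inr (Or.inl rfl))
          · exact absurd hl2X hw
        · rcases (hsel g hg hg1 hg2).2.2.2.1 w hwg with rfl | rfl
          · exact absurd (hlgX g hg hg1 hg2) hw
          · exact Or.inr (Or.inr (Or.inr ⟨g, hg, hg1, hg2, rfl⟩))
      -- basic distinctness
      have h_ell_b : ell ≠ b := hne_of he1 he2 he12 hellmem hbe2
      have h_a_l2 : a ≠ l2 := hne_of he1 he2 he12 hae1 hl2mem
      have hnal2 : ¬ G.Adj ell l2 := fun h =>
        no_c4 hgirth haell.symm hab hbl2 h.symm h_ell_b h_a_l2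
      -- resolution: (ell, b)
      have resEllB : ∃ x ∈ X, G.dist ell x ≠ G.dist b x := by
        refine ⟨l2, hl2X, ?_⟩
        rw [show G.dist b l2 = 1 from dist_eq_one_iff_adj.mpr hbl2]
        exact dist_ne_one' hnal2
      -- resolution: (ell, sel g .2)
      have resEllC : ∀ g ∈ F, g ≠ e1 → g ≠ e2 →
          ∃ x ∈ X, G.dist ell x ≠ G.dist (sel g).2 x := by
        intro g hg hg1 hg2
        obtain ⟨hadjg, hlgm, hcgm, hchar, hrule⟩ := hsel g hg hg1 hg2
        refine ⟨(sel g).1, hlgX g hg hg1 hg2, ?_⟩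
        rw [show G.dist (sel g).2 (sel g).1 = 1 from dist_eq_one_iff_adj.mpr hadjg]
        exact dist_ne_one' hrule
      -- resolution: (a, sel g .2)
      have resAC : ∀ g ∈ F, g ≠ e1 → g ≠ e2 → ¬ G.Adj a (sel g).2 →
          ∃ x ∈ X, G.dist a x ≠ G.dist (sel g).2 x := by
        intro g hg hg1 hg2 hna
        obtain ⟨hadjg, hlgm, hcgm, hchar, hrule⟩ := hsel g hg hg1 hg2
        have he1g : e1 ≠ g := hg1.symm
        have he2g : e2 ≠ g := hg2.symm
        have h_cg_a : (sel g).2 ≠ a := hne_of hg he1 hg1 hcgm hae1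
        have h_lg_b : (sel g).1 ≠ b := hne_of hg he2 hg2 hlgm hbe2
        have h_cg_b : (sel g).2 ≠ b := hne_of hg he2 hg2 hcgm hbe2
        have h_cg_l2 : (sel g).2 ≠ l2 := hne_of hg he2 hg2 hcgm hl2mem
        have h_l2_lg : l2 ≠ (sel g).1 := hne_of he2 hg he2g hl2mem hlgm
        by_cases hAlg : G.Adj a (sel g).1
        · have hd2 : G.dist a l2 = 2 :=
            dist_two_of hG hab hbl2 h_a_l2 (fun h => no_c3 hgirth hab hbl2 h.symm)
          have hd2' : G.dist (sel g).2 l2 ≠ 2 := by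
            intro h2
            obtain ⟨w, hw1, hw2⟩ := dist2_mid hG h2
            by_cases hwa : w = a
            · subst hwa
              exact hna hw1.symm
            by_cases hwb : w = b
            · subst hwb
              exact no_c4 hgirth hadjg hAlg.symm hab hw1.symm h_cg_a h_lg_b
            by_cases hwe : w = ell
            · subst hwe
              exact no_c4 hgirth haell.symm hab hbl2 hw2.symm h_ell_b h_a_l2
            by_cases hwl : w = (sel g).1
            · subst hwl
              exact no_c4 hgirth hAlg.symm hab hbl2 hw2.symm h_lg_b h_a_l2
            · exact no_c6 hgirth hw1 hw2 hbl2.symm hab.symm hAlg hadjg.symm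
                h_cg_l2 h_cg_b h_cg_a hwb hwa hwl h_a_l2.symm h_l2_lg h_lg_b.symm
          exact ⟨l2, hl2X, by rw [hd2]; exact fun h => hd2' h.symm⟩
        · refine ⟨(sel g).1, hlgX g hg hg1 hg2, ?_⟩
          rw [show G.dist (sel g).2 (sel g).1 = 1 from dist_eq_one_iff_adj.mpr hadjg]
          exact dist_ne_one' hAlg
      -- resolution: (b, sel g .2) and (sel g .2, sel g' .2) via resCC
      refine Nat.sInf_le ⟨X, hXcard, main_wrap hG X ?_⟩
      intro u v hne hna hu hv
      rcases hclass u hu with rfl | rfl | rfl | ⟨g, hg, hg1, hg2, rfl⟩ <;>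
        rcases hclass v hv with rfl | rfl | rfl | ⟨g', hg', hg1', hg2', rfl⟩
      · exact absurd rfl hne
      · exact absurd haell.symm hna
      · exact resEllB
      · exact resEllC g' hg' hg1' hg2'
      · exact absurd haell hna
      · exact absurd rfl hne
      · exact absurd hab hna
      · exact resAC g' hg' hg1' hg2' hna
      · obtain ⟨x, hx, hd⟩ := resEllB
        exact ⟨x, hx, hd.symm⟩
      · exact absurd hab.symm hna
      · exact absurd rfl hne
      · -- (b, sel g' .2)
        obtain ⟨hadjg', hlgm', hcgm', _, _⟩ := hsel g' hg' hg1' hg2'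
        exact resCC hgirth (hne_of he2 hg' hg2'.symm hbe2 hcgm') hna hl2X
          (hlgX g' hg' hg1' hg2') hbl2 hadjg' (hne_of he2 hg' hg2'.symm hl2mem hlgm')
      · obtain ⟨x, hx, hd⟩ := resEllC g hg hg1 hg2
        exact ⟨x, hx, hd.symm⟩
      · obtain ⟨x, hx, hd⟩ := resAC g hg hg1 hg2 (fun h => hna h.symm)
        exact ⟨x, hx, hd.symm⟩
      · obtain ⟨hadjg, hlgm, hcgm, _, _⟩ := hsel g hg hg1 hg2
        obtain ⟨x, hx, hd⟩ := resCC hgirth (hne_of he2 hg hg2.symm hbe2 hcgm)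
          (fun h => hna h.symm) hl2X (hlgX g hg hg1 hg2) hbl2 hadjg
          (hne_of he2 hg hg2.symm hl2mem hlgm)
        exact ⟨x, hx, hd.symm⟩
      · by_cases hgg : g = g'
        · subst hgg
          exact absurd rfl hne
        · obtain ⟨hadjg, hlgm, hcgm, _, _⟩ := hsel g hg hg1 hg2
          obtain ⟨hadjg', hlgm', hcgm', _, _⟩ := hsel g' hg' hg1' hg2'
          exact resCC hgirth (hne_of hg hg' hgg hcgm hcgm') hna
            (hlgX g hg hg1 hg2) (hlgX g' hg' hg1' hg2') hadjg hadjg'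
            (hne_of hg hg' hgg hlgm hlgm')

end
end
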